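/- Fix m ≥ 1 and n ≥ 1, let ℓ(n) = lcm(1,...,n) and p_n(x) = Σ_{k=1}^{n} (-1)^{k-1} (ℓ(n)/k) m^{n-k} x^k. Then there exist polynomials v_n ∈ ℤ[y] and s_{n+1} ∈ ℤ[x,y], where every monomial of s_{n+1} has total degree ≥ n+1, such that p_n(x + m·y + x·y) = p_n(x) + m^n·v_n(y) + s_{n+1}(x,y) in ℤ[x,y]. Moreover one may take v_n(y) = ℓ(n)·Σ_{k=1}^{n} (-1)^{k-1} y^k / k. -/

import Mathlib

open MvPolynomial

/-- `ℓ(n) = lcm(1,…,n)`. -/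
def lcmN (n : ℕ) : ℕ := (Finset.Icc 1 n).lcm id

/-- `p_n(x) = ∑_{k=1}^n (-1)^{k-1} (ℓ(n)/k) m^{n-k} x^k ∈ ℤ[x]`. -/
noncomputable def pPoly (m : ℤ) (n : ℕ) : Polynomial ℤ :=
  ∑ k ∈ Finset.Icc 1 n,
    Polynomial.C ((-1 : ℤ) ^ (k - 1) * ((lcmN n / k : ℕ) : ℤ) * m ^ (n - k)) * Polynomial.X ^ k

/-- `v_n(y) = ℓ(n)·∑_{k=1}^n (-1)^{k-1} y^k / k ∈ ℤ[y]`. -/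
noncomputable def vPoly (n : ℕ) : Polynomial ℤ :=
  ∑ k ∈ Finset.Icc 1 n,
    Polynomial.C ((-1 : ℤ) ^ (k - 1) * ((lcmN n / k : ℕ) : ℤ)) * Polynomial.X ^ k

section Aux
open Finset

/-- lower bound on total degree of all monomials -/
def LB (a : ℕ) (p : MvPolynomial (Fin 2) ℚ) : Prop :=
  ∀ d ∈ p.support, a ≤ d.sum fun _ e => e

lemma LB_zero (a : ℕ) : LB a (0 : MvPolynomial (Fin 2) ℚ) := by
  intro d hd; simp at hd

lemma LB_any (p : MvPolynomial (Fin 2) ℚ) : LB 0 p := fun d _ => Nat.zero_le _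

lemma LB_add {a : ℕ} {p q : MvPolynomial (Fin 2) ℚ} (hp : LB a p) (hq : LB a q) :
    LB a (p + q) := by
  intro d hd
  rcases Finset.mem_union.1 (MvPolynomial.support_add hd) with h | h
  · exact hp d h
  · exact hq d h

lemma LB_mul {a b : ℕ} {p q : MvPolynomial (Fin 2) ℚ} (hp : LB a p) (hq : LB b q) :
    LB (a + b) (p * q) := by
  intro d hd
  obtain ⟨e, he, f, hf, rfl⟩ := Finset.mem_add.1 (MvPolynomial.support_mul p q hd)
  rw [Finsupp.sum_add_index' (fun _ => rfl) (fun _ _ _ => rfl)]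
  exact Nat.add_le_add (hp e he) (hq f hf)

lemma LB_X (i : Fin 2) : LB 1 (X i : MvPolynomial (Fin 2) ℚ) := by
  intro d hd
  rw [MvPolynomial.support_X, Finset.mem_singleton] at hd
  subst hd; simp

lemma LB_sum {a : ℕ} {ι : Type*} (s : Finset ι) (f : ι → MvPolynomial (Fin 2) ℚ)
    (h : ∀ i ∈ s, LB a (f i)) : LB a (∑ i ∈ s, f i) := by
  classical
  induction s using Finset.induction_on with
  | empty => simpa using LB_zero a
  | insert _ _ hx ih =>
    rw [Finset.sum_insert hx]
    exact LB_add (h _ (Finset.mem_insert_self _ _))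
      (ih fun i hi => h i (Finset.mem_insert_of_mem hi))

lemma LB_pow {a : ℕ} {p : MvPolynomial (Fin 2) ℚ} (hp : LB a p) (k : ℕ) :
    LB (a * k) (p ^ k) := by
  induction k with
  | zero => simpa using LB_any 1
  | succ k ih =>
    rw [pow_succ, Nat.mul_succ]
    exact LB_mul ih hp

lemma LB_mono {a b : ℕ} {p : MvPolynomial (Fin 2) ℚ} (hab : b ≤ a) (hp : LB a p) : LB b p :=
  fun d hd => le_trans hab (hp d hd)

lemma coeff_pderiv (i : Fin 2) (d : Fin 2 →₀ ℕ) (f : MvPolynomial (Fin 2) ℚ) :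
    coeff d (pderiv i f) = (d i + 1 : ℕ) * coeff (d + Finsupp.single i 1) f := by
  have hrw : pderiv i f
      = ∑ e ∈ f.support, monomial (e - Finsupp.single i 1) (coeff e f * e i) := by
    conv_lhs => rw [f.as_sum]
    rw [map_sum]
    exact Finset.sum_congr rfl fun e _ => pderiv_monomial
  rw [hrw, MvPolynomial.coeff_sum]
  rw [Finset.sum_congr rfl (fun e _ => MvPolynomial.coeff_monomial d _ _)]
  have key : ∀ e : Fin 2 →₀ ℕ, 0 < e i → (e - Finsupp.single i 1 = d ↔ e = d + Finsupp.single i 1) := by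
    intro e h0
    constructor
    · intro h
      ext j
      have := congrArg (fun g => g j) h
      rcases eq_or_ne j i with rfl | hj
      · simp [Finsupp.tsub_apply] at this
        simp [Finsupp.add_apply]
        omega
      · simp [Finsupp.tsub_apply, Finsupp.single_apply, hj.symm] at this ⊢
        omega
    · intro h; subst h; ext j
      rcases eq_or_ne j i with rfl | hj
      · simp
      · simp [Finsupp.tsub_apply, Finsupp.single_apply, hj.symm]
  rcases Classical.em (d + Finsupp.single i 1 ∈ f.support) with hmem | hmem
  · rw [Finset.sum_eq_single_of_mem (d + Finsupp.single i 1) hmem]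
    · have h1 : (d + Finsupp.single i 1) - Finsupp.single i 1 = d := by
        ext j; simp [Finsupp.tsub_apply]
      simp [h1, mul_comm]
    · intro e he hne
      rcases Nat.eq_zero_or_pos (e i) with h0 | h0
      · simp [h0]
      · have : e - Finsupp.single i 1 ≠ d := fun h => hne ((key e h0).1 h)
        simp [this]
  · rw [MvPolynomial.notMem_support_iff] at hmem
    rw [hmem, mul_zero]
    apply Finset.sum_eq_zero
    intro e he
    rcases Nat.eq_zero_or_pos (e i) with h0 | h0
    · simp [h0]
    · have : e - Finsupp.single i 1 ≠ d := by
        intro h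
        have he2 := (key e h0).1 h
        rw [MvPolynomial.mem_support_iff, he2, hmem] at he
        exact he rfl
      simp [this]


lemma icc_to_range {M : Type*} [AddCommMonoid M] (n : ℕ) (f : ℕ → M) :
    ∑ k ∈ Finset.Icc 1 n, f k = ∑ i ∈ Finset.range n, f (i+1) := by
  induction n with
  | zero => simp
  | succ n ih =>
    rw [Finset.sum_Icc_succ_top (by omega), ih, Finset.sum_range_succ]

lemma tele (n : ℕ) (L m : ℚ) (z : MvPolynomial (Fin 2) ℚ) :
    ∑ k ∈ Finset.Icc 1 n, C ((-1:ℚ)^(k-1) * L * m^(n-k)) * z^(k-1) * (C m + z)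
      = C (L * m^n) - C ((-1:ℚ)^n * L) * z^n := by
  set a : ℕ → MvPolynomial (Fin 2) ℚ := fun j => C ((-1:ℚ)^j * L * m^(n-j)) * z^j with ha
  have h1 : ∑ k ∈ Finset.Icc 1 n, C ((-1:ℚ)^(k-1) * L * m^(n-k)) * z^(k-1) * (C m + z)
      = ∑ i ∈ Finset.range n, (a i - a (i+1)) := by
    rw [icc_to_range]
    apply Finset.sum_congr rfl
    intro i hi
    rw [Finset.mem_range] at hi
    have e1 : i + 1 - 1 = i := by omega
    have e2 : n - (i + 1) = n - 1 - i := by omega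
    have e3 : n - i = (n - 1 - i) + 1 := by omega
    rw [e1, e2, ha]
    simp only
    have e4 : n - (i+1) = n - 1 - i := by omega
    rw [e3, e4, pow_succ (-1:ℚ) i, pow_succ m (n-1-i), pow_succ z i]
    rw [mul_add]
    simp only [C_mul, C_neg, C_1]
    ring
  rw [h1, Finset.sum_range_sub' a n, ha]
  simp only [pow_zero, Nat.sub_zero, Nat.sub_self, one_mul, mul_one]

lemma keyQ (m : ℚ) (hm : m ≠ 0) (n : ℕ) (hn : 1 ≤ n) :
    LB (n+1)
      ((∑ k ∈ Finset.Icc 1 n,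
          C ((-1:ℚ)^(k-1) * ((lcmN n / k : ℕ):ℚ) * m^(n-k)) * (X 0 + C m * X 1 + X 0 * X 1)^k)
        - (∑ k ∈ Finset.Icc 1 n,
          C ((-1:ℚ)^(k-1) * ((lcmN n / k : ℕ):ℚ) * m^(n-k)) * (X 0 : MvPolynomial (Fin 2) ℚ)^k)
        - C (m^n) * ∑ k ∈ Finset.Icc 1 n,
          C ((-1:ℚ)^(k-1) * ((lcmN n / k : ℕ):ℚ)) * (X 1 : MvPolynomial (Fin 2) ℚ)^k) := by
  classical
  set x : MvPolynomial (Fin 2) ℚ := X 0 with hx_def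
  set y : MvPolynomial (Fin 2) ℚ := X 1 with hy_def
  set U : MvPolynomial (Fin 2) ℚ := x + C m * y + x * y with hU_def
  set L : ℚ := (lcmN n : ℚ) with hL_def
  set c : ℕ → ℚ := fun k => (-1:ℚ)^(k-1) * ((lcmN n / k : ℕ):ℚ) * m^(n-k) with hc_def
  set e : ℕ → ℚ := fun k => (-1:ℚ)^(k-1) * ((lcmN n / k : ℕ):ℚ) with he_def
  set q : MvPolynomial (Fin 2) ℚ :=
    (∑ k ∈ Finset.Icc 1 n, C (c k) * U^k)
      - (∑ k ∈ Finset.Icc 1 n, C (c k) * x^k)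
      - C (m^n) * (∑ k ∈ Finset.Icc 1 n, C (e k) * y^k) with hq_def
  -- divisibility
  have hdvd : ∀ k ∈ Finset.Icc 1 n, ((lcmN n / k : ℕ):ℚ) * k = L := by
    intro k hk
    rw [Finset.mem_Icc] at hk
    have hdk : k ∣ lcmN n := Finset.dvd_lcm (f := id) (Finset.mem_Icc.2 hk)
    rw [hL_def, ← Nat.cast_mul, Nat.div_mul_cancel hdk]
  -- nonzero cancellators
  have hx0 : (C m + x : MvPolynomial (Fin 2) ℚ) ≠ 0 := by
    intro h
    apply hm
    have := congrArg constantCoeff h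
    simpa [hx_def] using this
  have hy0 : (1 + y : MvPolynomial (Fin 2) ℚ) ≠ 0 := by
    intro h
    have := congrArg constantCoeff h
    simp [hy_def] at this
  -- pderiv basics
  have hpy0 : pderiv (0 : Fin 2) y = 0 := pderiv_X_of_ne (by decide)
  have hpx1 : pderiv (1 : Fin 2) x = 0 := pderiv_X_of_ne (by decide)
  have hpx0 : pderiv (0 : Fin 2) x = 1 := pderiv_X_self 0
  have hpy1 : pderiv (1 : Fin 2) y = 1 := pderiv_X_self 1
  have hU0 : pderiv (0 : Fin 2) U = 1 + y := by
    rw [hU_def]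
    simp [pderiv_mul, pderiv_C_mul, hpy0, hpx0]
  have hU1 : pderiv (1 : Fin 2) U = C m + x := by
    rw [hU_def]
    simp [pderiv_mul, pderiv_C_mul, hpy1, hpx1]
  have hkey : (C m + x) * (1 + y) = C m + U := by rw [hU_def]; ring
  have hUx : U - x = (C m + x) * y := by rw [hU_def]; ring
  have hUy : U - C m * y = x * (1 + y) := by rw [hU_def]; ring
  have hsign : ((-1:ℚ))^n = -(-1:ℚ)^(n-1) := by
    conv_lhs => rw [show n = (n-1)+1 by omega]
    rw [pow_succ]; ring
  -- pderiv 0 of q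
  have e0 : pderiv (0 : Fin 2) q
      = (∑ k ∈ Finset.Icc 1 n, C (c k) * ((k : MvPolynomial (Fin 2) ℚ) * U^(k-1) * (1 + y)))
        - ∑ k ∈ Finset.Icc 1 n, C (c k) * ((k : MvPolynomial (Fin 2) ℚ) * x^(k-1)) := by
    rw [hq_def]
    rw [map_sub, map_sub, map_sum, map_sum, pderiv_C_mul, map_sum]
    rw [Finset.sum_congr rfl (fun k _ => by rw [pderiv_C_mul, pderiv_pow, hU0] :
      ∀ k ∈ Finset.Icc 1 n, pderiv (0:Fin 2) (C (c k) * U^k) = C (c k) * ((k : MvPolynomial (Fin 2) ℚ) * U^(k-1) * (1+y)))]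
    rw [Finset.sum_congr rfl (fun k _ => by rw [pderiv_C_mul, pderiv_pow, hpx0, mul_one] :
      ∀ k ∈ Finset.Icc 1 n, pderiv (0:Fin 2) (C (c k) * x^k) = C (c k) * ((k : MvPolynomial (Fin 2) ℚ) * x^(k-1)))]
    rw [Finset.sum_congr rfl (fun k _ => by rw [pderiv_C_mul, pderiv_pow, hpy0, mul_zero, mul_zero] :
      ∀ k ∈ Finset.Icc 1 n, pderiv (0:Fin 2) (C (e k) * y^k) = 0)]
    simp
  have hDq0 : pderiv (0 : Fin 2) q
      = C ((-1:ℚ)^(n-1) * L) * (y * ∑ i ∈ Finset.range n, U^i * x^(n-1-i)) := by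
    apply mul_left_cancel₀ hx0
    rw [e0, mul_sub, Finset.mul_sum, Finset.mul_sum]
    have t1 : ∀ k ∈ Finset.Icc 1 n,
        (C m + x) * (C (c k) * ((k : MvPolynomial (Fin 2) ℚ) * U^(k-1) * (1 + y)))
          = C ((-1:ℚ)^(k-1) * L * m^(n-k)) * U^(k-1) * (C m + U) := by
      intro k hk
      have hck : c k * k = (-1:ℚ)^(k-1) * L * m^(n-k) := by
        rw [hc_def]
        have := hdvd k hk
        push_cast at this ⊢
        linear_combination ((-1:ℚ)^(k-1) * m^(n-k)) * this
      calc (C m + x) * (C (c k) * ((k : MvPolynomial (Fin 2) ℚ) * U^(k-1) * (1 + y)))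
          = C (c k * k) * U^(k-1) * ((C m + x) * (1 + y)) := by
            rw [show ((k : ℕ) : MvPolynomial (Fin 2) ℚ) = C (k : ℚ) from (map_natCast C k).symm]
            simp only [C_mul]; ring
        _ = C ((-1:ℚ)^(k-1) * L * m^(n-k)) * U^(k-1) * (C m + U) := by rw [hck, hkey]
    have t2 : ∀ k ∈ Finset.Icc 1 n,
        (C m + x) * (C (c k) * ((k : MvPolynomial (Fin 2) ℚ) * x^(k-1)))
          = C ((-1:ℚ)^(k-1) * L * m^(n-k)) * x^(k-1) * (C m + x) := by
      intro k hk
      have hck : c k * k = (-1:ℚ)^(k-1) * L * m^(n-k) := by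
        rw [hc_def]
        have := hdvd k hk
        push_cast at this ⊢
        linear_combination ((-1:ℚ)^(k-1) * m^(n-k)) * this
      rw [← hck, show ((k : ℕ) : MvPolynomial (Fin 2) ℚ) = C (k : ℚ) from (map_natCast C k).symm]
      simp only [C_mul]; ring
    rw [Finset.sum_congr rfl t1, Finset.sum_congr rfl t2, tele n L m U, tele n L m x]
    have hg : (∑ i ∈ Finset.range n, U^i * x^(n-1-i)) * ((C m + x) * y) = U^n - x^n := by
      rw [← hUx, geom_sum₂_mul]
    calc C (L * m^n) - C ((-1:ℚ)^n * L) * U^n - (C (L * m^n) - C ((-1:ℚ)^n * L) * x^n)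
        = - (C ((-1:ℚ)^n * L) * (U^n - x^n)) := by ring
      _ = C ((-1:ℚ)^(n-1) * L) * (U^n - x^n) := by
          rw [hsign]; simp only [C_mul, C_neg]; ring
      _ = C ((-1:ℚ)^(n-1) * L) * ((∑ i ∈ Finset.range n, U^i * x^(n-1-i)) * ((C m + x) * y)) := by
          rw [hg]
      _ = (C m + x) * (C ((-1:ℚ)^(n-1) * L) * (y * ∑ i ∈ Finset.range n, U^i * x^(n-1-i))) := by
          ring
  -- pderiv 1 of q
  have e1 : pderiv (1 : Fin 2) q
      = (∑ k ∈ Finset.Icc 1 n, C (c k) * ((k : MvPolynomial (Fin 2) ℚ) * U^(k-1) * (C m + x)))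
        - C (m^n) * ∑ k ∈ Finset.Icc 1 n, C (e k) * ((k : MvPolynomial (Fin 2) ℚ) * y^(k-1)) := by
    rw [hq_def]
    rw [map_sub, map_sub, map_sum, pderiv_C_mul, map_sum, map_sum]
    rw [Finset.sum_congr rfl (fun k _ => by rw [pderiv_C_mul, pderiv_pow, hU1] :
      ∀ k ∈ Finset.Icc 1 n, pderiv (1:Fin 2) (C (c k) * U^k) = C (c k) * ((k : MvPolynomial (Fin 2) ℚ) * U^(k-1) * (C m + x)))]
    rw [Finset.sum_congr rfl (fun k _ => by rw [pderiv_C_mul, pderiv_pow, hpx1, mul_zero, mul_zero] :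
      ∀ k ∈ Finset.Icc 1 n, pderiv (1:Fin 2) (C (c k) * x^k) = 0)]
    rw [Finset.sum_congr rfl (fun k _ => by rw [pderiv_C_mul, pderiv_pow, hpy1, mul_one] :
      ∀ k ∈ Finset.Icc 1 n, pderiv (1:Fin 2) (C (e k) * y^k) = C (e k) * ((k : MvPolynomial (Fin 2) ℚ) * y^(k-1)))]
    simp
  have hDq1 : pderiv (1 : Fin 2) q
      = C ((-1:ℚ)^(n-1) * L) * (x * ∑ i ∈ Finset.range n, U^i * (C m * y)^(n-1-i)) := by
    apply mul_left_cancel₀ hy0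
    rw [e1, mul_sub, Finset.mul_sum, mul_comm ((1 : MvPolynomial (Fin 2) ℚ) + y) (C (m^n) * _),
      mul_assoc, Finset.sum_mul]
    have t1 : ∀ k ∈ Finset.Icc 1 n,
        (1 + y) * (C (c k) * ((k : MvPolynomial (Fin 2) ℚ) * U^(k-1) * (C m + x)))
          = C ((-1:ℚ)^(k-1) * L * m^(n-k)) * U^(k-1) * (C m + U) := by
      intro k hk
      have hck : c k * k = (-1:ℚ)^(k-1) * L * m^(n-k) := by
        rw [hc_def]
        have := hdvd k hk
        push_cast at this ⊢
        linear_combination ((-1:ℚ)^(k-1) * m^(n-k)) * this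
      calc (1 + y) * (C (c k) * ((k : MvPolynomial (Fin 2) ℚ) * U^(k-1) * (C m + x)))
          = C (c k * k) * U^(k-1) * ((C m + x) * (1 + y)) := by
            rw [show ((k : ℕ) : MvPolynomial (Fin 2) ℚ) = C (k : ℚ) from (map_natCast C k).symm]
            simp only [C_mul]; ring
        _ = C ((-1:ℚ)^(k-1) * L * m^(n-k)) * U^(k-1) * (C m + U) := by rw [hck, hkey]
    have t2 : ∀ k ∈ Finset.Icc 1 n,
        C (e k) * ((k : MvPolynomial (Fin 2) ℚ) * y^(k-1)) * (1 + y)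
          = C ((-1:ℚ)^(k-1) * L * (1:ℚ)^(n-k)) * y^(k-1) * (C 1 + y) := by
      intro k hk
      have hek : e k * k = (-1:ℚ)^(k-1) * L := by
        rw [he_def]
        have := hdvd k hk
        push_cast at this ⊢
        linear_combination ((-1:ℚ)^(k-1)) * this
      rw [one_pow, mul_one, ← hek,
        show ((k : ℕ) : MvPolynomial (Fin 2) ℚ) = C (k : ℚ) from (map_natCast C k).symm, C_1]
      simp only [C_mul]; ring
    rw [Finset.sum_congr rfl t1, Finset.sum_congr rfl t2, tele n L m U, tele n L 1 y]
    have hg : (∑ i ∈ Finset.range n, U^i * (C m * y)^(n-1-i)) * (x * (1 + y))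
        = U^n - (C m * y)^n := by
      rw [← hUy, geom_sum₂_mul]
    have hCmy : (C (m^n) : MvPolynomial (Fin 2) ℚ) = (C m)^n := by rw [C_pow]
    calc C (L * m^n) - C ((-1:ℚ)^n * L) * U^n
          - C (m^n) * (C (L * 1^n) - C ((-1:ℚ)^n * L) * y^n)
        = - (C ((-1:ℚ)^n * L) * (U^n - (C m * y)^n)) := by
          rw [hCmy]; simp only [C_mul, C_pow, one_pow, C_1]; ring
      _ = C ((-1:ℚ)^(n-1) * L) * (U^n - (C m * y)^n) := by
          rw [hsign]; simp only [C_mul, C_neg]; ring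
      _ = C ((-1:ℚ)^(n-1) * L) * ((∑ i ∈ Finset.range n, U^i * (C m * y)^(n-1-i)) * (x * (1 + y))) := by
          rw [hg]
      _ = (1 + y) * (C ((-1:ℚ)^(n-1) * L) * (x * ∑ i ∈ Finset.range n, U^i * (C m * y)^(n-1-i))) := by
          ring
  -- degree bounds
  have hLBU : LB 1 U := by
    rw [hU_def]
    refine LB_add (LB_add (LB_X 0) ?_) ?_
    · exact LB_mul (a := 0) (LB_any _) (LB_X 1)
    · exact LB_mono (by omega) (LB_mul (LB_X 0) (LB_X 1))
  have hLB0 : LB n (pderiv (0:Fin 2) q) := by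
    rw [hDq0]
    have hs : LB (n-1) (∑ i ∈ Finset.range n, U^i * x^(n-1-i)) := by
      apply LB_sum
      intro i hi
      rw [Finset.mem_range] at hi
      refine LB_mono ?_ (LB_mul (LB_pow hLBU i) (LB_pow (LB_X 0) (n-1-i)))
      omega
    refine LB_mono ?_ (LB_mul (a := 0) (LB_any _) (LB_mul (LB_X 1) hs))
    omega
  have hLB1 : LB n (pderiv (1:Fin 2) q) := by
    rw [hDq1]
    have hCmy : LB 1 (C m * y) := LB_mul (a := 0) (LB_any _) (LB_X 1)
    have hs : LB (n-1) (∑ i ∈ Finset.range n, U^i * (C m * y)^(n-1-i)) := by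
      apply LB_sum
      intro i hi
      rw [Finset.mem_range] at hi
      refine LB_mono ?_ (LB_mul (LB_pow hLBU i) (LB_pow hCmy (n-1-i)))
      omega
    refine LB_mono ?_ (LB_mul (a := 0) (LB_any _) (LB_mul (LB_X 0) hs))
    omega
  -- constant coefficient
  have hc0 : coeff 0 q = 0 := by
    have hU00 : constantCoeff U = 0 := by
      rw [hU_def, hx_def, hy_def]; simp
    have z1 : ∀ k ∈ Finset.Icc 1 n, constantCoeff (C (c k) * U^k) = 0 := by
      intro k hk
      rw [Finset.mem_Icc] at hk
      rw [map_mul, map_pow, hU00, zero_pow (by omega : k ≠ 0), mul_zero]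
    have z2 : ∀ k ∈ Finset.Icc 1 n, constantCoeff (C (c k) * x^k) = 0 := by
      intro k hk
      rw [Finset.mem_Icc] at hk
      rw [map_mul, map_pow, hx_def, constantCoeff_X, zero_pow (by omega : k ≠ 0), mul_zero]
    have z3 : ∀ k ∈ Finset.Icc 1 n, constantCoeff (C (e k) * y^k) = 0 := by
      intro k hk
      rw [Finset.mem_Icc] at hk
      rw [map_mul, map_pow, hy_def, constantCoeff_X, zero_pow (by omega : k ≠ 0), mul_zero]
    have h : constantCoeff q = 0 := by
      rw [hq_def, map_sub, map_sub, map_mul, map_sum, map_sum, map_sum,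
        Finset.sum_eq_zero z1, Finset.sum_eq_zero z2, Finset.sum_eq_zero z3]
      ring
    exact h
  -- conclusion
  intro d hd
  rcases eq_or_ne d 0 with rfl | hdne
  · rw [mem_support_iff] at hd
    exact absurd hc0 hd
  · obtain ⟨i, hi⟩ : ∃ i, d i ≠ 0 := by
      by_contra h
      push_neg at h
      exact hdne (Finsupp.ext h)
    have hd'add : (d - Finsupp.single i 1) + Finsupp.single i 1 = d := by
      ext j
      rcases eq_or_ne j i with rfl | hj
      · simp only [Finsupp.add_apply, Finsupp.tsub_apply, Finsupp.single_eq_same]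
        omega
      · simp [Finsupp.add_apply, Finsupp.tsub_apply, Finsupp.single_apply, Ne.symm hj]
    have hco : coeff (d - Finsupp.single i 1) (pderiv i q) ≠ 0 := by
      rw [coeff_pderiv, hd'add]
      apply mul_ne_zero
      · exact Nat.cast_ne_zero.mpr (Nat.succ_ne_zero _)
      · exact mem_support_iff.1 hd
    have hmem' := mem_support_iff.2 hco
    have hge : n ≤ (d - Finsupp.single i 1).sum fun _ e => e := by
      fin_cases i
      · exact hLB0 _ hmem'
      · exact hLB1 _ hmem'
    have hsum : (d.sum fun _ e => e) = ((d - Finsupp.single i 1).sum fun _ e => e) + 1 := by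
      conv_lhs => rw [← hd'add]
      rw [Finsupp.sum_add_index' (fun _ => rfl) (fun _ _ _ => rfl),
        Finsupp.sum_single_index rfl]
    omega


end Aux

/-- there is `s_{n+1} ∈ ℤ[x,y]`, all of whose monomials have total degree
`≥ n+1`, such that `p_n(x + m·y + x·y) = p_n(x) + m^n·v_n(y) + s_{n+1}(x,y)`, where one may
take `v_n(y) = ℓ(n)·∑_{k=1}^n (-1)^{k-1} y^k/k`. -/
theorem stmt11 (m : ℤ) (hm : 1 ≤ m) (n : ℕ) (hn : 1 ≤ n) :
    ∃ s : MvPolynomial (Fin 2) ℤ,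
      (∀ d ∈ s.support, n + 1 ≤ d.sum fun _ e => e) ∧
      Polynomial.aeval (X 0 + C m * X 1 + X 0 * X 1 : MvPolynomial (Fin 2) ℤ) (pPoly m n)
        = Polynomial.aeval (X 0 : MvPolynomial (Fin 2) ℤ) (pPoly m n)
          + C (m ^ n) * Polynomial.aeval (X 1 : MvPolynomial (Fin 2) ℤ) (vPoly n)
          + s := by
  classical
  refine ⟨Polynomial.aeval (X 0 + C m * X 1 + X 0 * X 1 : MvPolynomial (Fin 2) ℤ) (pPoly m n)
      - Polynomial.aeval (X 0 : MvPolynomial (Fin 2) ℤ) (pPoly m n)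
      - C (m ^ n) * Polynomial.aeval (X 1 : MvPolynomial (Fin 2) ℤ) (vPoly n), ?_, by ring⟩
  have hm' : ((m : ℚ)) ≠ 0 := by
    have : m ≠ 0 := by omega
    exact_mod_cast this
  have hmain := keyQ (m : ℚ) hm' n hn
  have hmap : MvPolynomial.map (Int.castRingHom ℚ)
      (Polynomial.aeval (X 0 + C m * X 1 + X 0 * X 1 : MvPolynomial (Fin 2) ℤ) (pPoly m n)
        - Polynomial.aeval (X 0 : MvPolynomial (Fin 2) ℤ) (pPoly m n)
        - C (m ^ n) * Polynomial.aeval (X 1 : MvPolynomial (Fin 2) ℤ) (vPoly n))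
      = ((∑ k ∈ Finset.Icc 1 n,
          C ((-1:ℚ)^(k-1) * ((lcmN n / k : ℕ):ℚ) * (m:ℚ)^(n-k)) * (X 0 + C (m:ℚ) * X 1 + X 0 * X 1)^k)
        - (∑ k ∈ Finset.Icc 1 n,
          C ((-1:ℚ)^(k-1) * ((lcmN n / k : ℕ):ℚ) * (m:ℚ)^(n-k)) * (X 0 : MvPolynomial (Fin 2) ℚ)^k)
        - C ((m:ℚ)^n) * ∑ k ∈ Finset.Icc 1 n,
          C ((-1:ℚ)^(k-1) * ((lcmN n / k : ℕ):ℚ)) * (X 1 : MvPolynomial (Fin 2) ℚ)^k) := by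
    simp only [pPoly, vPoly, map_sum, map_sub, map_mul, map_pow, map_add, Polynomial.aeval_C,
      Polynomial.aeval_X, algebraMap_eq, MvPolynomial.map_C, MvPolynomial.map_X,
      map_neg, map_one, map_natCast, Int.coe_castRingHom]
  intro d hd
  have hcoeff : MvPolynomial.coeff d (MvPolynomial.map (Int.castRingHom ℚ)
      (Polynomial.aeval (X 0 + C m * X 1 + X 0 * X 1 : MvPolynomial (Fin 2) ℤ) (pPoly m n)
        - Polynomial.aeval (X 0 : MvPolynomial (Fin 2) ℤ) (pPoly m n)
        - C (m ^ n) * Polynomial.aeval (X 1 : MvPolynomial (Fin 2) ℤ) (vPoly n))) ≠ 0 := by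
    rw [MvPolynomial.coeff_map]
    have := mem_support_iff.1 hd
    exact (Int.cast_ne_zero (α := ℚ)).mpr this
  rw [hmap] at hcoeff
  exact hmain d (mem_support_iff.2 hcoeff)
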